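/- Suppose a probability measure μ on a Polish metric space satisfies Gozlan's dimension-free concentration: there exists c > 0 such that for all n ≥ 1, all 1-Lipschitz F: Ωⁿ → ℝ (w.r.t. the ℓ²-product metric) and all x > 0, μⁿ(|F − ∫F dμⁿ| > x) ≤ 2exp(−cx²). Then for the empirical measure μ_N = (1/N)∑_{n=1}^N δ_{X^n} of N i.i.d. samples X^n ∼ μ, one has P(|W₂(μ, μ_N) − E[W₂(μ, μ_N)]| ≥ x) ≤ 2exp(−c x² N) for all x > 0 and N ≥ 1. -/

import Mathlib

open MeasureTheory ENNReal

/-- `π` is a coupling of `μ` and `ν`. -/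
def IsCoupling {Ω : Type*} [MeasurableSpace Ω]
    (π : Measure (Ω × Ω)) (μ ν : Measure Ω) : Prop :=
  π.map Prod.fst = μ ∧ π.map Prod.snd = ν

/-- Squared 2-Wasserstein distance. -/
noncomputable def W2sq {Ω : Type*} [PseudoMetricSpace Ω] [MeasurableSpace Ω]
    (μ ν : Measure Ω) : ℝ≥0∞ :=
  ⨅ (π : Measure (Ω × Ω)) (_ : IsCoupling π μ ν), ∫⁻ p, edist p.1 p.2 ^ 2 ∂π

/-- The (real-valued) 2-Wasserstein distance. -/
noncomputable def W2 {Ω : Type*} [PseudoMetricSpace Ω] [MeasurableSpace Ω]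
    (μ ν : Measure Ω) : ℝ :=
  Real.sqrt (W2sq μ ν).toReal

/-- The empirical measure of the sample `y : Fin N → Ω`. -/
noncomputable def empMeasure {Ω : Type*} [MeasurableSpace Ω] {N : ℕ}
    (y : Fin N → Ω) : Measure Ω :=
  (N : ℝ≥0∞)⁻¹ • ∑ n : Fin N, Measure.dirac (y n)

section Aux

open scoped Classical

variable {Ω : Type*} [MetricSpace Ω] [PolishSpace Ω] [MeasurableSpace Ω] [BorelSpace Ω]

/-- number of duplicates of `a` in the sample `z`. -/
noncomputable def kdup {N : ℕ} (z : Fin N → Ω) (a : Ω) : ℕ :=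
  (Finset.univ.filter fun m => z m = a).card

/-- the piece of the coupling `π` sitting above the atom `z n` of the second marginal,
with its mass split equally among the duplicates of `z n`. -/
noncomputable def kappa {N : ℕ} (π : Measure (Ω × Ω)) (z : Fin N → Ω) (n : Fin N) : Measure Ω :=
  ((kdup z (z n) : ℝ≥0∞))⁻¹ • Measure.map Prod.fst (π.restrict ((Prod.snd : Ω × Ω → Ω) ⁻¹' {z n}))

lemma kdup_pos {N : ℕ} (z : Fin N → Ω) (n : Fin N) : 0 < kdup z (z n) := by
  apply Finset.card_pos.2
  exact ⟨n, by simp [kdup]⟩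

lemma lintegral_kappa {N : ℕ} {π : Measure (Ω × Ω)} {z : Fin N → Ω}
    (hπ : π.map Prod.snd = empMeasure z) (g : Ω × Ω → ℝ≥0∞) (hg : Measurable g) :
    ∫⁻ p, g p ∂π = ∑ n : Fin N, ∫⁻ ω, g (ω, z n) ∂(kappa π z n) := by
  set S : Finset Ω := Finset.univ.image z with hSdef
  have hz : ∀ n, z n ∈ S := fun n => Finset.mem_image_of_mem z (Finset.mem_univ n)
  have hSm : MeasurableSet (↑S : Set Ω) := S.finite_toSet.measurableSet
  have hnull : π ((Prod.snd : Ω × Ω → Ω) ⁻¹' (↑S : Set Ω)ᶜ) = 0 := by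
    rw [← Measure.map_apply measurable_snd hSm.compl, hπ]
    rw [empMeasure, Measure.smul_apply, Measure.finset_sum_apply]
    have : ∀ n : Fin N, Measure.dirac (z n) (↑S : Set Ω)ᶜ = 0 := by
      intro n
      rw [Measure.dirac_apply' _ hSm.compl]
      simp [hz n]
    simp [this]
  have hres : π.restrict ((Prod.snd : Ω × Ω → Ω) ⁻¹' (↑S : Set Ω)) = π := by
    apply Measure.restrict_eq_self_of_ae_mem
    have h : {p : Ω × Ω | ¬ p ∈ (Prod.snd : Ω × Ω → Ω) ⁻¹' (↑S : Set Ω)} = (Prod.snd : Ω × Ω → Ω) ⁻¹' (↑S : Set Ω)ᶜ := rfl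
    exact ae_iff.2 (h ▸ hnull)
  have hmeas : ∀ a ∈ S, MeasurableSet ((Prod.snd : Ω × Ω → Ω) ⁻¹' ({a} : Set Ω)) :=
    fun a _ => (measurable_snd : Measurable (Prod.snd : Ω × Ω → Ω)) (measurableSet_singleton a)
  have hdisj : Set.PairwiseDisjoint (↑S) (fun a : Ω => (Prod.snd : Ω × Ω → Ω) ⁻¹' ({a} : Set Ω)) := by
    intro a _ b _ hab
    apply Set.disjoint_left.2
    rintro ⟨_, _⟩ rfl rfl
    exact hab rfl
  have hunion : (Prod.snd : Ω × Ω → Ω) ⁻¹' (↑S : Set Ω) = ⋃ a ∈ S, (Prod.snd : Ω × Ω → Ω) ⁻¹' ({a} : Set Ω) := by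
    ext p; simp
  calc ∫⁻ p, g p ∂π = ∫⁻ p in ⋃ a ∈ S, (Prod.snd : Ω × Ω → Ω) ⁻¹' ({a} : Set Ω), g p ∂π := by
        rw [← hunion, hres]
    _ = ∑ a ∈ S, ∫⁻ p in (Prod.snd : Ω × Ω → Ω) ⁻¹' ({a} : Set Ω), g p ∂π :=
        lintegral_biUnion_finset hdisj hmeas g
    _ = ∑ a ∈ S, ∫⁻ ω, g (ω, a) ∂(Measure.map Prod.fst (π.restrict ((Prod.snd : Ω × Ω → Ω) ⁻¹' ({a} : Set Ω)))) := by
        refine Finset.sum_congr rfl fun a ha => ?_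
        rw [lintegral_map (f := fun ω => g (ω, a)) (hg.comp measurable_prodMk_right) measurable_fst]
        refine setLIntegral_congr_fun (hmeas a ha) (fun p hp => ?_)
        simp only [Set.mem_preimage, Set.mem_singleton_iff] at hp
        simp [← hp]
    _ = ∑ n : Fin N, (kdup z (z n) : ℝ≥0∞)⁻¹ *
          ∫⁻ ω, g (ω, z n) ∂(Measure.map Prod.fst (π.restrict ((Prod.snd : Ω × Ω → Ω) ⁻¹' ({z n} : Set Ω)))) := by
        rw [Finset.sum_comp (fun a : Ω => (kdup z a : ℝ≥0∞)⁻¹ *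
          ∫⁻ ω, g (ω, a) ∂(Measure.map Prod.fst (π.restrict ((Prod.snd : Ω × Ω → Ω) ⁻¹' ({a} : Set Ω))))) z]
        refine Finset.sum_congr rfl fun a ha => ?_
        have hk : (kdup z a : ℝ≥0∞) ≠ 0 := by
          obtain ⟨n, -, rfl⟩ := Finset.mem_image.1 ha
          exact_mod_cast (kdup_pos z n).ne'
        rw [nsmul_eq_mul]
        rw [show ((Finset.univ.filter fun m => z m = a).card : ℝ≥0∞) = (kdup z a : ℝ≥0∞) from rfl]
        rw [← mul_assoc, ENNReal.mul_inv_cancel hk (by simp), one_mul]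
    _ = ∑ n : Fin N, ∫⁻ ω, g (ω, z n) ∂(kappa π z n) := by
        refine Finset.sum_congr rfl fun n _ => ?_
        rw [kappa, lintegral_smul_measure, smul_eq_mul]

lemma kappa_univ {N : ℕ} {π : Measure (Ω × Ω)} {z : Fin N → Ω}
    (hπ : π.map Prod.snd = empMeasure z) (n : Fin N) :
    kappa π z n Set.univ = (N : ℝ≥0∞)⁻¹ := by
  have hsing : MeasurableSet ({z n} : Set Ω) := measurableSet_singleton _
  have h1 : π ((Prod.snd : Ω × Ω → Ω) ⁻¹' {z n}) = empMeasure z {z n} := by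
    rw [← Measure.map_apply measurable_snd hsing, hπ]
  have h2 : empMeasure z {z n} = (N : ℝ≥0∞)⁻¹ * (kdup z (z n) : ℝ≥0∞) := by
    rw [empMeasure, Measure.smul_apply, Measure.finset_sum_apply]
    congr 1
    have : ∀ m : Fin N, Measure.dirac (z m) ({z n} : Set Ω)
        = if z m = z n then 1 else 0 := by
      intro m
      rw [Measure.dirac_apply' _ hsing]
      by_cases h : z m = z n <;> simp [h]
    rw [Finset.sum_congr rfl fun m _ => this m]
    rw [Finset.sum_boole]
    simp [kdup]
  rw [kappa, Measure.smul_apply, smul_eq_mul,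
    Measure.map_apply measurable_fst MeasurableSet.univ]
  simp only [Set.preimage_univ, Measure.restrict_apply_univ]
  rw [h1, h2]
  have hk0 : (kdup z (z n) : ℝ≥0∞) ≠ 0 := by exact_mod_cast (kdup_pos z n).ne'
  rw [← mul_assoc, mul_comm ((kdup z (z n) : ℝ≥0∞))⁻¹, mul_assoc, mul_comm ((kdup z (z n) : ℝ≥0∞))⁻¹,
    ENNReal.mul_inv_cancel hk0 (by simp), mul_one]

lemma kappa_sum {N : ℕ} {π : Measure (Ω × Ω)} {μ : Measure Ω} {z : Fin N → Ω}
    (hπ1 : π.map Prod.fst = μ) (hπ2 : π.map Prod.snd = empMeasure z) :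
    ∑ n : Fin N, kappa π z n = μ := by
  ext A hA
  rw [Measure.finset_sum_apply]
  have hg : Measurable fun p : Ω × Ω => A.indicator (fun _ => (1 : ℝ≥0∞)) p.1 :=
    (measurable_one.indicator hA).comp measurable_fst
  have := lintegral_kappa hπ2 (fun p => A.indicator (fun _ => (1 : ℝ≥0∞)) p.1) hg
  have hL : ∫⁻ p : Ω × Ω, A.indicator (fun _ => (1 : ℝ≥0∞)) p.1 ∂π = μ A := by
    have h1 : ∫⁻ p : Ω × Ω, A.indicator (fun _ => (1 : ℝ≥0∞)) p.1 ∂π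
        = ∫⁻ p : Ω × Ω, ((Prod.fst : Ω × Ω → Ω) ⁻¹' A).indicator 1 p ∂π := by
      refine lintegral_congr fun p => ?_
      by_cases h : p.1 ∈ A <;> simp [Set.indicator_apply, h]
    rw [h1, lintegral_indicator_one (measurable_fst hA),
      ← Measure.map_apply measurable_fst hA, hπ1]
  have hR : ∀ n : Fin N, ∫⁻ ω, A.indicator (fun _ => (1 : ℝ≥0∞)) ω ∂(kappa π z n)
      = kappa π z n A := fun n => lintegral_indicator_one hA
  rw [← hL, this]
  exact Finset.sum_congr rfl fun n _ => (hR n).symm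

lemma W2sq_half_le (μ : Measure Ω) [IsProbabilityMeasure μ] {N : ℕ} (y z : Fin N → Ω) :
    W2sq μ (empMeasure y) ^ (1/2 : ℝ) ≤ W2sq μ (empMeasure z) ^ (1/2 : ℝ) +
      ((∑ n : Fin N, edist (z n) (y n) ^ 2) / N) ^ (1/2 : ℝ) := by
  set E : ℝ≥0∞ := ((∑ n : Fin N, edist (z n) (y n) ^ 2) / N) ^ (1/2 : ℝ) with hE
  have hedist2 : Measurable fun p : Ω × Ω => edist p.1 p.2 ^ 2 :=
    (measurable_fst.edist measurable_snd).pow_const 2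
  have key : ∀ π : Measure (Ω × Ω), IsCoupling π μ (empMeasure z) →
      W2sq μ (empMeasure y) ^ (1/2 : ℝ) ≤ (∫⁻ p, edist p.1 p.2 ^ 2 ∂π) ^ (1/2 : ℝ) + E := by
    intro π hcpl
    obtain ⟨hπ1, hπ2⟩ := hcpl
    set κ := kappa π z with hκ
    have hemb : ∀ n : Fin N, Measurable fun ω : Ω => (ω, y n) :=
      fun n => measurable_id.prodMk measurable_const
    set π' : Measure (Ω × Ω) := ∑ n : Fin N, Measure.map (fun ω => (ω, y n)) (κ n) with hπ'
    have hπ'1 : π'.map Prod.fst = μ := by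
      rw [← kappa_sum hπ1 hπ2]
      ext A hA
      rw [Measure.map_apply measurable_fst hA, hπ', Measure.finset_sum_apply,
        Measure.finset_sum_apply]
      refine Finset.sum_congr rfl fun n _ => ?_
      rw [Measure.map_apply (hemb n) (measurable_fst hA)]
      rfl
    have hπ'2 : π'.map Prod.snd = empMeasure y := by
      ext A hA
      rw [Measure.map_apply measurable_snd hA, hπ', Measure.finset_sum_apply,
        empMeasure, Measure.smul_apply, Measure.finset_sum_apply, smul_eq_mul,
        Finset.mul_sum]
      refine Finset.sum_congr rfl fun n _ => ?_
      rw [Measure.map_apply (hemb n) (measurable_snd hA),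
        Measure.dirac_apply' _ hA]
      by_cases h : y n ∈ A
      · have h2 : (fun ω : Ω => (ω, y n)) ⁻¹' ((Prod.snd : Ω × Ω → Ω) ⁻¹' A) = Set.univ := by
          ext ω; simp [h]
        rw [h2, kappa_univ hπ2 n, Set.indicator_of_mem h]
        simp
      · have h2 : (fun ω : Ω => (ω, y n)) ⁻¹' ((Prod.snd : Ω × Ω → Ω) ⁻¹' A) = ∅ := by
          ext ω; simp [h]
        rw [h2, Set.indicator_of_notMem h]
        simp
    -- the auxiliary measure on Ω × Fin N
    set ρ : Measure (Ω × Fin N) := Measure.sum (fun n => Measure.map (fun ω => (ω, n)) (κ n))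
      with hρ
    have hint : ∀ f : Ω × Fin N → ℝ≥0∞, Measurable f →
        ∫⁻ p, f p ∂ρ = ∑ n : Fin N, ∫⁻ ω, f (ω, n) ∂(κ n) := by
      intro f hf
      rw [hρ, lintegral_sum_measure, tsum_fintype]
      exact Finset.sum_congr rfl fun n _ =>
        lintegral_map hf (measurable_id.prodMk measurable_const)
    set G : Ω × Fin N → ℝ≥0∞ := fun p => edist p.1 (z p.2) with hG
    set H : Ω × Fin N → ℝ≥0∞ := fun p => edist (z p.2) (y p.2) with hH
    have hGm : Measurable G :=
      measurable_from_prod_countable_left fun n =>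
        (measurable_id.edist measurable_const : Measurable fun ω : Ω => edist ω (z n))
    have hHm : Measurable H :=
      measurable_from_prod_countable_left fun n =>
        (measurable_const : Measurable fun _ : Ω => edist (z n) (y n))
    set K : Ω × Fin N → ℝ≥0∞ := fun p => edist p.1 (y p.2) with hK
    have hKm : Measurable K :=
      measurable_from_prod_countable_left fun n =>
        (measurable_id.edist measurable_const : Measurable fun ω : Ω => edist ω (y n))
    -- cost of π'
    have hcost' : (∫⁻ p, edist p.1 p.2 ^ 2 ∂π') = ∫⁻ p, K p ^ 2 ∂ρ := by
      rw [hπ', lintegral_finset_sum_measure, hint (fun p => K p ^ 2) (hKm.pow_const 2)]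
      refine Finset.sum_congr rfl fun n _ => ?_
      rw [lintegral_map (f := fun p : Ω × Ω => edist p.1 p.2 ^ 2) hedist2 (hemb n)]
    have hcostπ : (∫⁻ p, edist p.1 p.2 ^ 2 ∂π) = ∫⁻ p, G p ^ 2 ∂ρ := by
      rw [lintegral_kappa hπ2 (fun p => edist p.1 p.2 ^ 2) hedist2,
        hint (fun p => G p ^ 2) (hGm.pow_const 2)]
    have hCost : (∫⁻ p, H p ^ 2 ∂ρ) = (∑ n : Fin N, edist (z n) (y n) ^ 2) / N := by
      rw [hint (fun p => H p ^ 2) (hHm.pow_const 2)]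
      have : ∀ n : Fin N, ∫⁻ ω, H (ω, n) ^ 2 ∂(κ n) = edist (z n) (y n) ^ 2 * (N : ℝ≥0∞)⁻¹ := by
        intro n
        rw [hH]
        simp only []
        rw [lintegral_const, kappa_univ hπ2 n]
      rw [Finset.sum_congr rfl fun n _ => this n, ← Finset.sum_mul, ENNReal.div_eq_inv_mul,
        mul_comm]
    -- pointwise triangle inequality
    have htri : ∫⁻ p, K p ^ 2 ∂ρ ≤ ∫⁻ p, (G p + H p) ^ 2 ∂ρ := by
      refine lintegral_mono fun p => ?_
      gcongr
      exact edist_triangle _ _ _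
    -- Minkowski
    have hmink : (∫⁻ p, (G p + H p) ^ 2 ∂ρ) ^ (1/2 : ℝ)
        ≤ (∫⁻ p, G p ^ 2 ∂ρ) ^ (1/2 : ℝ) + (∫⁻ p, H p ^ 2 ∂ρ) ^ (1/2 : ℝ) := by
      have := ENNReal.lintegral_Lp_add_le (μ := ρ) (p := 2) hGm.aemeasurable hHm.aemeasurable one_le_two
      have h2 : ∀ x : ℝ≥0∞, x ^ (2 : ℝ) = x ^ (2 : ℕ) := fun x => by
        rw [← ENNReal.rpow_natCast]; norm_num
      simpa only [h2, Pi.add_apply] using this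
    -- assemble
    have h1 : W2sq μ (empMeasure y) ≤ ∫⁻ p, edist p.1 p.2 ^ 2 ∂π' :=
      iInf₂_le π' ⟨hπ'1, hπ'2⟩
    calc W2sq μ (empMeasure y) ^ (1/2 : ℝ)
        ≤ (∫⁻ p, edist p.1 p.2 ^ 2 ∂π') ^ (1/2 : ℝ) :=
          ENNReal.rpow_le_rpow h1 (by norm_num)
      _ = (∫⁻ p, K p ^ 2 ∂ρ) ^ (1/2 : ℝ) := by rw [hcost']
      _ ≤ (∫⁻ p, (G p + H p) ^ 2 ∂ρ) ^ (1/2 : ℝ) := ENNReal.rpow_le_rpow htri (by norm_num)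
      _ ≤ (∫⁻ p, G p ^ 2 ∂ρ) ^ (1/2 : ℝ) + (∫⁻ p, H p ^ 2 ∂ρ) ^ (1/2 : ℝ) := hmink
      _ = (∫⁻ p, edist p.1 p.2 ^ 2 ∂π) ^ (1/2 : ℝ) + E := by rw [hcostπ, hCost, hE]
  -- pass to the infimum
  have hinf : W2sq μ (empMeasure z) ^ (1/2 : ℝ)
      = ⨅ (π : Measure (Ω × Ω)) (_ : IsCoupling π μ (empMeasure z)),
          (∫⁻ p, edist p.1 p.2 ^ 2 ∂π) ^ (1/2 : ℝ) := by
    have h1 := (ENNReal.orderIsoRpow (1/2 : ℝ) one_half_pos).map_iInf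
      (fun π : Measure (Ω × Ω) =>
        ⨅ (_ : IsCoupling π μ (empMeasure z)), ∫⁻ p, edist p.1 p.2 ^ 2 ∂π)
    have h2 : ∀ π : Measure (Ω × Ω), (ENNReal.orderIsoRpow (1/2 : ℝ) one_half_pos)
        (⨅ (_ : IsCoupling π μ (empMeasure z)), ∫⁻ p, edist p.1 p.2 ^ 2 ∂π)
        = ⨅ (_ : IsCoupling π μ (empMeasure z)),
          (ENNReal.orderIsoRpow (1/2 : ℝ) one_half_pos) (∫⁻ p, edist p.1 p.2 ^ 2 ∂π) :=
      fun π => (ENNReal.orderIsoRpow (1/2 : ℝ) one_half_pos).map_iInf _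
    simp only [ENNReal.orderIsoRpow_apply] at h1 h2
    rw [W2sq, h1]
    exact iInf_congr h2
  rw [hinf, ENNReal.iInf_add]
  refine le_iInf fun π => ?_
  rw [ENNReal.iInf_add]
  exact le_iInf fun hcpl => key π hcpl

lemma toReal_half (a : ℝ≥0∞) : (a ^ (1/2 : ℝ)).toReal = Real.sqrt a.toReal := by
  rw [← ENNReal.toReal_rpow, Real.sqrt_eq_rpow]

lemma W2_emp_le (μ : Measure Ω) [IsProbabilityMeasure μ] {N : ℕ} (hN : 0 < N) (y z : Fin N → Ω) :
    W2 μ (empMeasure y) ≤ W2 μ (empMeasure z)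
      + Real.sqrt ((∑ n : Fin N, dist (z n) (y n) ^ 2) / N) := by
  have hNne : (N : ℝ≥0∞) ≠ 0 := by exact_mod_cast hN.ne'
  set e : ℝ≥0∞ := (∑ n : Fin N, edist (z n) (y n) ^ 2) / N with he
  have hene : e ≠ ⊤ := by
    refine (ENNReal.div_lt_top ?_ hNne).ne
    exact (ENNReal.sum_lt_top.2 fun n _ => (ENNReal.pow_ne_top (edist_ne_top _ _)).lt_top).ne
  have heR : e.toReal = (∑ n : Fin N, dist (z n) (y n) ^ 2) / N := by
    rw [he, ENNReal.toReal_div, ENNReal.toReal_natCast,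
      ENNReal.toReal_sum (fun n _ => ENNReal.pow_ne_top (edist_ne_top _ _))]
    congr 1
    exact Finset.sum_congr rfl fun n _ => by rw [ENNReal.toReal_pow, ← dist_edist]
  by_cases hz : W2sq μ (empMeasure z) = ⊤
  · have h2 := W2sq_half_le μ z y
    have htop : W2sq μ (empMeasure y) = ⊤ := by
      by_contra h
      have h3 : W2sq μ (empMeasure y) ^ (1/2 : ℝ) ≠ ⊤ :=
        ENNReal.rpow_ne_top_of_nonneg (by norm_num) h
      have he'ne : ((∑ n : Fin N, edist (y n) (z n) ^ 2) / N : ℝ≥0∞) ≠ ⊤ := by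
        refine (ENNReal.div_lt_top ?_ hNne).ne
        exact (ENNReal.sum_lt_top.2 fun n _ => (ENNReal.pow_ne_top (edist_ne_top _ _)).lt_top).ne
      have he' : ((∑ n : Fin N, edist (y n) (z n) ^ 2) / N : ℝ≥0∞) ^ (1/2 : ℝ) ≠ ⊤ :=
        ENNReal.rpow_ne_top_of_nonneg (by norm_num) he'ne
      rw [hz, ENNReal.top_rpow_of_pos (by norm_num)] at h2
      exact (ENNReal.add_ne_top.2 ⟨h3, he'⟩) (top_le_iff.1 h2)
    rw [W2, W2, hz, htop]
    simp only [ENNReal.toReal_top, Real.sqrt_zero, zero_add]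
    positivity
  · have h := W2sq_half_le μ y z
    have hzfin : W2sq μ (empMeasure z) ^ (1/2 : ℝ) ≠ ⊤ :=
      ENNReal.rpow_ne_top_of_nonneg (by norm_num) hz
    have hefin : e ^ (1/2 : ℝ) ≠ ⊤ := ENNReal.rpow_ne_top_of_nonneg (by norm_num) hene
    have hRfin : W2sq μ (empMeasure z) ^ (1/2 : ℝ) + e ^ (1/2 : ℝ) ≠ ⊤ :=
      ENNReal.add_ne_top.2 ⟨hzfin, hefin⟩
    have hmono := ENNReal.toReal_mono hRfin h
    rw [ENNReal.toReal_add hzfin hefin, toReal_half, toReal_half, toReal_half, heR] at hmono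
    exact hmono

lemma F_lip (μ : Measure Ω) [IsProbabilityMeasure μ] {N : ℕ} (hN : 0 < N)
    (y z : Fin N → Ω) :
    |Real.sqrt N * W2 μ (empMeasure y) - Real.sqrt N * W2 μ (empMeasure z)|
      ≤ Real.sqrt (∑ i, dist (y i) (z i) ^ 2) := by
  have hNR : (0:ℝ) < N := by exact_mod_cast hN
  have hsN : (0:ℝ) < Real.sqrt N := Real.sqrt_pos.2 hNR
  have hsqrt : Real.sqrt N * Real.sqrt ((∑ i, dist (y i) (z i) ^ 2) / N)
      = Real.sqrt (∑ i, dist (y i) (z i) ^ 2) := by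
    rw [← Real.sqrt_mul hNR.le]
    congr 1
    field_simp
  have hd : (∑ n, dist (z n) (y n) ^ 2) = ∑ i, dist (y i) (z i) ^ 2 :=
    Finset.sum_congr rfl fun i _ => by rw [dist_comm]
  have hd' : (∑ n, dist (y n) (z n) ^ 2) = ∑ i, dist (y i) (z i) ^ 2 := rfl
  have h1 := W2_emp_le μ hN y z
  have h2 := W2_emp_le μ hN z y
  rw [hd] at h1
  rw [hd'] at h2
  rw [abs_sub_le_iff, ← hsqrt]
  constructor
  · have := mul_le_mul_of_nonneg_left h1 hsN.le
    rw [mul_add] at this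
    linarith
  · have := mul_le_mul_of_nonneg_left h2 hsN.le
    rw [mul_add] at this
    linarith

end Aux

/-- Gozlan's dimension-free concentration implies concentration of the 2-Wasserstein
distance between the true measure and the empirical measure of `N` i.i.d. samples. -/
theorem empirical_wasserstein_concentration
    {Ω : Type*} [MetricSpace Ω] [PolishSpace Ω] [MeasurableSpace Ω] [BorelSpace Ω]
    (μ : Measure Ω) [IsProbabilityMeasure μ] (c : ℝ) (hc : 0 < c)
    (hconc : ∀ n : ℕ, 1 ≤ n → ∀ F : (Fin n → Ω) → ℝ,
      (∀ y z : Fin n → Ω, |F y - F z| ≤ Real.sqrt (∑ i, dist (y i) (z i) ^ 2)) →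
      Integrable F (Measure.pi fun _ : Fin n => μ) →
      ∀ x : ℝ, 0 < x →
        (Measure.pi fun _ : Fin n => μ)
            {y | x < |F y - ∫ z, F z ∂(Measure.pi fun _ : Fin n => μ)|} ≤
          ENNReal.ofReal (2 * Real.exp (-c * x ^ 2)))
    (hWint : ∀ N : ℕ, 1 ≤ N →
      Integrable (fun y : Fin N → Ω => W2 μ (empMeasure y)) (Measure.pi fun _ : Fin N => μ)) :
    ∀ N : ℕ, 1 ≤ N → ∀ x : ℝ, 0 < x →
      (Measure.pi fun _ : Fin N => μ)
          {y | x ≤ |W2 μ (empMeasure y) -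
            ∫ z, W2 μ (empMeasure z) ∂(Measure.pi fun _ : Fin N => μ)|} ≤
        ENNReal.ofReal (2 * Real.exp (-c * x ^ 2 * N)) := by
  intro N hN x hx
  have hNpos : 0 < N := hN
  have hNR : (0:ℝ) < N := by exact_mod_cast hN
  have hsN : (0:ℝ) < Real.sqrt N := Real.sqrt_pos.2 hNR
  have hFint : Integrable (fun v : Fin N → Ω => Real.sqrt N * W2 μ (empMeasure v))
      (Measure.pi fun _ : Fin N => μ) := (hWint N hN).const_mul _
  have hFavg : ∫ v, Real.sqrt N * W2 μ (empMeasure v) ∂(Measure.pi fun _ : Fin N => μ)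
      = Real.sqrt N * ∫ v, W2 μ (empMeasure v) ∂(Measure.pi fun _ : Fin N => μ) :=
    integral_const_mul _ _
  have key : ∀ s : ℝ, s ∈ Set.Ioo 0 x →
      (Measure.pi fun _ : Fin N => μ)
          {y | x ≤ |W2 μ (empMeasure y) -
            ∫ z, W2 μ (empMeasure z) ∂(Measure.pi fun _ : Fin N => μ)|} ≤
        ENNReal.ofReal (2 * Real.exp (-c * s ^ 2 * N)) := by
    intro s hs
    have hsub : {y | x ≤ |W2 μ (empMeasure y) -
          ∫ z, W2 μ (empMeasure z) ∂(Measure.pi fun _ : Fin N => μ)|}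
        ⊆ {y | Real.sqrt N * s < |(fun v : Fin N → Ω => Real.sqrt N * W2 μ (empMeasure v)) y -
          ∫ z, (fun v : Fin N → Ω => Real.sqrt N * W2 μ (empMeasure v)) z
            ∂(Measure.pi fun _ : Fin N => μ)|} := by
      intro v hv
      simp only [Set.mem_setOf_eq] at hv ⊢
      rw [hFavg, ← mul_sub, abs_mul, abs_of_nonneg hsN.le]
      have h1 := mul_lt_mul_of_pos_left hs.2 hsN
      exact h1.trans_le (mul_le_mul_of_nonneg_left hv hsN.le)
    refine (measure_mono hsub).trans ?_
    have hxs : 0 < Real.sqrt N * s := mul_pos hsN hs.1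
    have hb := hconc N hN (fun v : Fin N → Ω => Real.sqrt N * W2 μ (empMeasure v))
      (fun y z => F_lip μ hNpos y z) hFint (Real.sqrt N * s) hxs
    have harg : -c * (Real.sqrt N * s) ^ 2 = -c * s ^ 2 * N := by
      rw [mul_pow, Real.sq_sqrt hNR.le]; ring
    rw [harg] at hb
    exact hb
  have hcont : Continuous fun s : ℝ => ENNReal.ofReal (2 * Real.exp (-c * s ^ 2 * N)) := by
    have h0 : Continuous fun s : ℝ => -c * s ^ 2 * (N : ℝ) := by fun_prop
    exact ENNReal.continuous_ofReal.comp
      (continuous_const.mul (Real.continuous_exp.comp h0))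
  have htend : Filter.Tendsto (fun s : ℝ => ENNReal.ofReal (2 * Real.exp (-c * s ^ 2 * N)))
      (nhdsWithin x (Set.Iio x)) (nhds (ENNReal.ofReal (2 * Real.exp (-c * x ^ 2 * N)))) :=
    (hcont.tendsto x).mono_left nhdsWithin_le_nhds
  exact ge_of_tendsto htend (Filter.eventually_of_mem
    (Ioo_mem_nhdsLT_of_mem ⟨hx, le_refl x⟩) key)
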